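/- Let τ > 0 and let α, β, ω, α₁, β₁, α₂, β₂ be real numbers with β ≠ 0, ατ ≠ 1, ω > 0, ω² = β² − α², and suppose the tangency condition β·α₁·(1 − ατ) + β₁·(τβ² − α) = 0 holds. Set E = (iω − α)/β, ψ = 1/((1 − ατ) + iωτ), and ξ₁ = ψ·(α₁ + β₁·E). Then Re( ψ·[ α₂ + β₂·E − 2τ·β₁·E·ξ₁ + τ²·β·E·ξ₁² ] ) = G / ( β²·(ατ − 1)²·(−β²τ² + 2ατ − 1) ), where G = (ατ − 1)³·β²·α₂ + β·(ατ − 1)²·(α − β²τ)·β₂ − β₁²·τ·(α² − β²)·(β²τ² + ατ − 2). -/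

import Mathlib

set_option maxHeartbeats 4000000

/-- Under the tangency condition, the second-order crossing coefficient
2σ₄ = Re(ψ[α₂ + β₂E − 2τβ₁Eξ₁ + τ²βEξ₁²]) equals
G/(β²(ατ−1)²(−β²τ²+2ατ−1)), with E = (iω−α)/β, ψ = 1/((1−ατ)+iωτ),
ξ₁ = ψ(α₁+β₁E), and G the curvature nondegeneracy quantity. -/
theorem stmt6 (τ α β ω α₁ β₁ α₂ β₂ : ℝ) (hτ : 0 < τ) (hβ : β ≠ 0)
    (hατ : α * τ ≠ 1) (hω : 0 < ω) (hω2 : ω ^ 2 = β ^ 2 - α ^ 2)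
    (htan : β * α₁ * (1 - α * τ) + β₁ * (τ * β ^ 2 - α) = 0) :
    let E : ℂ := (Complex.I * ω - α) / β
    let ψ : ℂ := 1 / (((1 : ℂ) - α * τ) + Complex.I * ω * τ)
    let ξ₁ : ℂ := ψ * ((α₁ : ℂ) + (β₁ : ℂ) * E)
    (ψ * ((α₂ : ℂ) + (β₂ : ℂ) * E - 2 * (τ : ℂ) * β₁ * E * ξ₁ +
        (τ : ℂ) ^ 2 * β * E * ξ₁ ^ 2)).re =
      ((α * τ - 1) ^ 3 * β ^ 2 * α₂ + β * (α * τ - 1) ^ 2 * (α - β ^ 2 * τ) * β₂ -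
        β₁ ^ 2 * τ * (α ^ 2 - β ^ 2) * (β ^ 2 * τ ^ 2 + α * τ - 2)) /
      (β ^ 2 * (α * τ - 1) ^ 2 * (-(β ^ 2) * τ ^ 2 + 2 * α * τ - 1)) := by
  intro E ψ ξ₁
  have hατ' : α * τ - 1 ≠ 0 := sub_ne_zero.mpr hατ
  have hα₁ : α₁ = β₁ * (τ * β ^ 2 - α) / (β * (α * τ - 1)) := by
    rw [eq_div_iff (mul_ne_zero hβ hατ')]
    linear_combination -htan
  subst hα₁
  have hβC : (β : ℂ) ≠ 0 := Complex.ofReal_ne_zero.mpr hβ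
  have hατC : (α : ℂ) * τ - 1 ≠ 0 := by
    intro h
    apply hατ'
    exact_mod_cast h
  have hω2C : (ω : ℂ) ^ 2 = (β : ℂ) ^ 2 - (α : ℂ) ^ 2 := by exact_mod_cast hω2
  have hD : ((1 : ℂ) - α * τ) + Complex.I * ω * τ ≠ 0 := by
    intro h
    have h2 := congrArg Complex.im h
    simp [Complex.add_im, Complex.mul_im] at h2
    rcases h2 with h2 | h2
    · exact hω.ne' h2
    · exact hτ.ne' h2
  have hξ : ξ₁ = -(Complex.I * ω * β₁) / (β * ((α : ℂ) * τ - 1)) := by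
    simp only [ξ₁, ψ, E]
    push_cast
    field_simp
    rw [div_eq_iff (by convert hD using 2; ring)]
    linear_combination (-(β₁ : ℂ) * τ) * hω2C + ((β₁:ℂ)*τ*(ω:ℂ)^2) * Complex.I_sq
  rw [hξ]
  have hQpos : 0 < (1 - α * τ) * (1 - α * τ) + ω * τ * (ω * τ) := by
    have h1 : 0 < (1 - α * τ) * (1 - α * τ) := by
      rcases lt_or_gt_of_ne (sub_ne_zero.mpr (Ne.symm hατ)) with h | h
      · exact mul_pos_of_neg_of_neg h h
      · exact mul_pos h h
    nlinarith [mul_pos hω hτ]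
  have hQ : (1 - α * τ) * (1 - α * τ) + ω * τ * (ω * τ) ≠ 0 := ne_of_gt hQpos
  have hden : -(β ^ 2) * τ ^ 2 + 2 * α * τ - 1 ≠ 0 := by nlinarith [hQpos, hω2]
  have hQ2 : τ ^ 2 * β ^ 2 - 2 * (α * τ) + 1 ≠ 0 := by nlinarith [hQpos, hω2]
  have hQ3 : τ ^ 2 * β ^ 2 - α * τ * 2 + 1 ≠ 0 := by nlinarith [hQpos, hω2]
  have hQ4 : 2 * (α * τ) - 1 - τ ^ 2 * β ^ 2 ≠ 0 := by nlinarith [hQpos, hω2]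
  have hP : α * τ * β ^ 2 * 4 + α * τ ^ 3 * β ^ 4 * 2 + (-(α ^ 2 * τ ^ 2 * β ^ 2 * 5) - α ^ 2 * τ ^ 4 * β ^ 4) + α ^ 3 * τ ^ 3 * β ^ 2 * 2 + (-(τ ^ 2 * β ^ 4) - β ^ 2) ≠ 0 := by
    have hprod := mul_ne_zero (mul_ne_zero (pow_ne_zero 2 hβ) (pow_ne_zero 2 hατ')) hden
    intro h
    apply hprod
    linear_combination h
  have h4 : ω ^ 4 = (β ^ 2 - α ^ 2) ^ 2 := by rw [← hω2]; ring
  have h6 : ω ^ 6 = (β ^ 2 - α ^ 2) ^ 3 := by rw [← hω2]; ring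
  have h8 : ω ^ 8 = (β ^ 2 - α ^ 2) ^ 4 := by rw [← hω2]; ring
  have h10 : ω ^ 10 = (β ^ 2 - α ^ 2) ^ 5 := by rw [← hω2]; ring
  have h12 : ω ^ 12 = (β ^ 2 - α ^ 2) ^ 6 := by rw [← hω2]; ring
  have h14 : ω ^ 14 = (β ^ 2 - α ^ 2) ^ 7 := by rw [← hω2]; ring
  have h16 : ω ^ 16 = (β ^ 2 - α ^ 2) ^ 8 := by rw [← hω2]; ring
  simp only [ψ, E, pow_two]
  simp only [Complex.div_re, Complex.div_im, Complex.mul_re, Complex.mul_im,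
    Complex.add_re, Complex.add_im, Complex.sub_re, Complex.sub_im,
    Complex.neg_re, Complex.neg_im,
    Complex.one_re, Complex.one_im, Complex.I_re, Complex.I_im,
    Complex.ofReal_re, Complex.ofReal_im, Complex.normSq_apply,
    Complex.re_ofNat, Complex.im_ofNat]
  have hden' : -(β * β * (τ * τ)) + 2 * α * τ - 1 ≠ 0 := by
    intro h; apply hden; linear_combination h
  field_simp [hP, hden']
  ring_nf
  simp only [hω2, h4, h6, h8, h10, h12, h14, h16]
  have hinv : (-1 - β ^ 2 * τ ^ 2 + α * τ * 2)⁻¹ = -(1 + β ^ 2 * τ ^ 2 - α * τ * 2)⁻¹ := by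
    rw [← inv_neg]; ring_nf
  simp only [hinv]
  ring
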